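/- Let f_n (n ∈ ℕ) and f be lower semicontinuous convex functions ℝ → (0,∞] with f_n(0) = f(0) = 1. If f_n converges to f in the Attouch-Wets sense, then log∘f_n converges to log∘f in the Attouch-Wets sense (as lower semicontinuous functions ℝ → (−∞,∞], with log ∞ = ∞). -/

import Mathlib

open MeasureTheory Filter Metric Set
open scoped ENNReal Classical

noncomputable section

/-- Epigraph of an extended-real-valued function on `ℝ`, as a subset of `ℝ²`
(which carries the box metric `dist p q = max |p₁-q₁| |p₂-q₂|`). -/
def epiE (f : ℝ → EReal) : Set (ℝ × ℝ) := {p | f p.1 ≤ (p.2 : EReal)}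

/-- `awGap A B r` is `sup_{x ∈ B̄_r} |dist(x,A) - dist(x,B)|`. -/
def awGap (A B : Set (ℝ × ℝ)) (r : ℝ) : ℝ :=
  sSup ((fun x => |infDist x A - infDist x B|) '' closedBall (0 : ℝ × ℝ) r)

/-- Attouch–Wets convergence of a sequence of functions, via epigraphs. -/
def AWTendsto (F : ℕ → ℝ → EReal) (f : ℝ → EReal) : Prop :=
  ∀ r : ℝ, 0 < r → Tendsto (fun n => awGap (epiE (F n)) (epiE f) r) atTop (nhds 0)

/-- The basic Attouch–Wets neighbourhood `V_k(f)`. -/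
def Vk (k : ℕ) (f : ℝ → EReal) : Set (ℝ → EReal) :=
  {g | awGap (epiE g) (epiE f) (k : ℝ) < 1 / (k : ℝ)}

/-- Convexity for extended-real-valued functions on `ℝ`. -/
def ERConvex (f : ℝ → EReal) : Prop :=
  ∀ x y a b : ℝ, 0 ≤ a → 0 ≤ b → a + b = 1 →
    f (a * x + b * y) ≤ (a : EReal) * f x + (b : EReal) * f y

/-- Effective domain of an extended-real-valued function. -/
def effDom (f : ℝ → EReal) : Set ℝ := {θ | f θ < ⊤}

/-- The moment generating function of a measure on `ℝ`, with values in `(0,∞]`. -/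
def mgfE (ν : Measure ℝ) : ℝ → EReal :=
  fun θ => ((∫⁻ x, ENNReal.ofReal (Real.exp (θ * x)) ∂ν : ℝ≥0∞) : EReal)

/-- `log` of a probability, with the convention `log 0 = -∞`. -/
def elog (p : ℝ≥0∞) : EReal := if p = 0 then ⊥ else ((Real.log p.toReal : ℝ) : EReal)

/-- The empirical moment generating function estimator
`M_n(θ) = (1/n) ∑_{i<n} exp (θ X_i)`. -/
def Mn {Ω : Type*} (X : ℕ → Ω → ℝ) (n : ℕ) (ω : Ω) : ℝ → EReal :=
  fun θ => (((n : ℝ)⁻¹ * ∑ i ∈ Finset.range n, Real.exp (θ * X i ω) : ℝ) : EReal)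

/-- The rate value `I_M(f) = -inf_{k ≥ 1} limsup_n (1/n) log ℙ(M_n ∈ V_k(f))`. -/
def IM {Ω : Type*} [MeasurableSpace Ω] (P : Measure Ω) (X : ℕ → Ω → ℝ)
    (f : ℝ → EReal) : EReal :=
  - ⨅ k ∈ Set.Ici 1, limsup
      (fun n : ℕ => (((n : ℝ)⁻¹ : ℝ) : EReal) * elog (P {ω | Mn X n ω ∈ Vk k f})) atTop

/-- `f` is lower semicontinuous, convex and `[0,∞]`-valued. -/
def IsAdm0 (f : ℝ → EReal) : Prop :=
  LowerSemicontinuous f ∧ ERConvex f ∧ ∀ θ, 0 ≤ f θ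

/-- `log : (−∞,∞] → [−∞,∞]`, with `log ∞ = ∞` and `log x = -∞` for `x ≤ 0`. -/
def logE (x : EReal) : EReal :=
  if x = ⊤ then ⊤ else if x ≤ 0 then ⊥ else ((Real.log x.toReal : ℝ) : EReal)

lemma logE_le_iff {x : EReal} (hx : 0 < x) (b : ℝ) :
    logE x ≤ (b : EReal) ↔ x ≤ ((Real.exp b : ℝ) : EReal) := by
  by_cases hT : x = ⊤
  · subst hT
    simp only [logE, if_pos rfl]
    constructor
    · intro h; exact absurd h (by simp)
    · intro h; exact absurd h (by simp)
  · have hB : x ≠ ⊥ := ne_bot_of_gt hx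
    lift x to ℝ using ⟨hT, hB⟩
    have hx' : 0 < x := EReal.coe_pos.mp hx
    simp only [logE, if_neg hT, if_neg (not_le.mpr hx), EReal.toReal_coe]
    rw [EReal.coe_le_coe_iff, EReal.coe_le_coe_iff]
    exact Real.log_le_iff_le_exp hx'

lemma mem_epiE_log {h : ℝ → EReal} (hpos : ∀ θ, 0 < h θ) (p : ℝ × ℝ) :
    p ∈ epiE (fun t => logE (h t)) ↔ h p.1 ≤ ((Real.exp p.2 : ℝ) : EReal) := by
  simp only [epiE, Set.mem_setOf_eq]
  exact logE_le_iff (hpos p.1) p.2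

lemma logE_one : logE 1 = 0 := by
  have h1 : (1 : EReal) ≠ ⊤ := by
    rw [← EReal.coe_one]; exact EReal.coe_ne_top 1
  have h2 : ¬ (1 : EReal) ≤ 0 := by norm_num
  simp only [logE, if_neg h1, if_neg h2]
  norm_num

lemma zero_mem_epiE_log {h : ℝ → EReal} (h0 : h 0 = 1) :
    (0 : ℝ × ℝ) ∈ epiE (fun t => logE (h t)) := by
  show logE (h (0 : ℝ × ℝ).1) ≤ (((0 : ℝ × ℝ).2 : ℝ) : EReal)
  simp only [Prod.fst_zero, Prod.snd_zero, h0, logE_one, EReal.coe_zero, le_refl]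

lemma one_mem_epiE {h : ℝ → EReal} (h0 : h 0 = 1) : ((0:ℝ), (1:ℝ)) ∈ epiE h := by
  show h 0 ≤ ((1:ℝ) : EReal)
  simp [h0]

lemma log_sub_log_le {a b m : ℝ} (hm : 0 < m) (ha : m ≤ a) (hb : m ≤ b) :
    Real.log a - Real.log b ≤ |a - b| / m := by
  have hap : 0 < a := hm.trans_le ha
  have hbp : 0 < b := hm.trans_le hb
  rw [← Real.log_div hap.ne' hbp.ne']
  calc Real.log (a / b) ≤ a / b - 1 := Real.log_le_sub_one_of_pos (div_pos hap hbp)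
    _ = (a - b) / b := by field_simp
    _ ≤ |a - b| / b := by gcongr; exact le_abs_self _
    _ ≤ |a - b| / m := by gcongr

lemma abs_log_sub_log_le {a b m : ℝ} (hm : 0 < m) (ha : m ≤ a) (hb : m ≤ b) :
    |Real.log a - Real.log b| ≤ |a - b| / m := by
  rw [abs_sub_le_iff]
  refine ⟨log_sub_log_le hm ha hb, ?_⟩
  rw [abs_sub_comm]
  exact log_sub_log_le hm hb ha

lemma gap_bound_left {A B : Set (ℝ × ℝ)} {R δ : ℝ} (h : awGap A B R ≤ δ)
    {y : ℝ × ℝ} (hyA : y ∈ A) (hyR : y ∈ closedBall (0 : ℝ × ℝ) R) :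
    infDist y B ≤ δ := by
  have hcont : Continuous fun x : ℝ × ℝ => |infDist x A - infDist x B| :=
    ((continuous_infDist_pt A).sub (continuous_infDist_pt B)).abs
  have hb : BddAbove ((fun x : ℝ × ℝ => |infDist x A - infDist x B|) ''
      closedBall (0 : ℝ × ℝ) R) :=
    ((isCompact_closedBall _ _).image hcont).bddAbove
  have hmem := Set.mem_image_of_mem
    (fun x : ℝ × ℝ => |infDist x A - infDist x B|) hyR
  have hle : |infDist y A - infDist y B| ≤ awGap A B R := le_csSup hb hmem
  rw [infDist_zero_of_mem hyA, zero_sub, abs_neg, abs_of_nonneg infDist_nonneg] at hle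
  exact hle.trans h

lemma gap_bound_right {A B : Set (ℝ × ℝ)} {R δ : ℝ} (h : awGap A B R ≤ δ)
    {y : ℝ × ℝ} (hyB : y ∈ B) (hyR : y ∈ closedBall (0 : ℝ × ℝ) R) :
    infDist y A ≤ δ := by
  have hcont : Continuous fun x : ℝ × ℝ => |infDist x A - infDist x B| :=
    ((continuous_infDist_pt A).sub (continuous_infDist_pt B)).abs
  have hb : BddAbove ((fun x : ℝ × ℝ => |infDist x A - infDist x B|) ''
      closedBall (0 : ℝ × ℝ) R) :=
    ((isCompact_closedBall _ _).image hcont).bddAbove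
  have hmem := Set.mem_image_of_mem
    (fun x : ℝ × ℝ => |infDist x A - infDist x B|) hyR
  have hle : |infDist y A - infDist y B| ≤ awGap A B R := le_csSup hb hmem
  rw [infDist_zero_of_mem hyB, sub_zero, abs_of_nonneg infDist_nonneg] at hle
  exact hle.trans h

lemma oneSide (g h : ℝ → EReal)
    (hgpos : ∀ θ, 0 < g θ) (hhpos : ∀ θ, 0 < h θ)
    (hg0 : g 0 = 1) (hh0 : h 0 = 1)
    (r δ : ℝ) (hr : 0 < r) (hδ : 0 < δ) (hδ4 : 4 * δ ≤ Real.exp (-(2*r+1)))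
    (hgap : ∀ y ∈ epiE g ∩ closedBall (0 : ℝ × ℝ) (Real.exp (2*r+1)),
      infDist y (epiE h) ≤ δ)
    (x : ℝ × ℝ) (hx : x ∈ closedBall (0 : ℝ × ℝ) r) :
    infDist x (epiE (fun t => logE (h t))) ≤
      infDist x (epiE (fun t => logE (g t))) + 4 * Real.exp (2*r+1) * δ := by
  set A := epiE (fun t => logE (g t)) with hA
  set B := epiE (fun t => logE (h t)) with hB
  set d := infDist x A with hd
  have hAne : A.Nonempty := ⟨0, zero_mem_epiE_log hg0⟩
  have hhne : (epiE h).Nonempty := ⟨((0:ℝ), (1:ℝ)), one_mem_epiE hh0⟩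
  have hxnorm : ‖x‖ ≤ r := mem_closedBall_zero_iff.mp hx
  have hx1 : |x.1| ≤ r := le_trans (norm_fst_le x) hxnorm
  have hx2 : |x.2| ≤ r := le_trans (norm_snd_le x) hxnorm
  have hdr : d ≤ r := by
    have h1 : d ≤ dist x 0 := infDist_le_dist_of_mem (zero_mem_epiE_log hg0)
    rw [dist_zero_right] at h1
    exact h1.trans hxnorm
  have hexp1 : (1:ℝ) ≤ Real.exp (2*r+1) := Real.one_le_exp (by linarith)
  have hexp2 : 2*r+1 ≤ Real.exp (2*r+1) := by linarith [Real.add_one_le_exp (2*r+1)]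
  refine le_of_forall_pos_le_add fun η hη => ?_
  set η' := min η 1 with hη'def
  have hη' : 0 < η' := lt_min hη one_pos
  have hη'1 : η' ≤ 1 := min_le_right _ _
  have hη'η : η' ≤ η := min_le_left _ _
  obtain ⟨y, hyA, hxy⟩ := (infDist_lt_iff hAne).mp (lt_add_of_pos_right d hη')
  have hxy' : dist x y ≤ r + 1 := le_of_lt (hxy.trans_le (by linarith))
  have hd1 : dist x.1 y.1 ≤ dist x y := by rw [Prod.dist_eq]; exact le_sup_left
  have hd2 : dist x.2 y.2 ≤ dist x y := by rw [Prod.dist_eq]; exact le_sup_right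
  have hy1 : |y.1| ≤ 2*r+1 := by
    have h1 : |y.1| - |x.1| ≤ |y.1 - x.1| := abs_sub_abs_le_abs_sub _ _
    have h2 : |y.1 - x.1| = dist x.1 y.1 := by rw [Real.dist_eq, abs_sub_comm]
    linarith
  have hy2 : |y.2| ≤ 2*r+1 := by
    have h1 : |y.2| - |x.2| ≤ |y.2 - x.2| := abs_sub_abs_le_abs_sub _ _
    have h2 : |y.2 - x.2| = dist x.2 y.2 := by rw [Real.dist_eq, abs_sub_comm]
    linarith
  set Φy : ℝ × ℝ := (y.1, Real.exp y.2) with hΦydef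
  have hΦ : Φy ∈ epiE g := by
    show g y.1 ≤ ((Real.exp y.2 : ℝ) : EReal)
    exact (mem_epiE_log hgpos y).mp hyA
  have hΦball : Φy ∈ closedBall (0 : ℝ × ℝ) (Real.exp (2*r+1)) := by
    rw [mem_closedBall_zero_iff, Prod.norm_def]
    refine max_le ?_ ?_
    · rw [Real.norm_eq_abs]; linarith
    · rw [Real.norm_eq_abs, abs_of_pos (Real.exp_pos _)]
      exact Real.exp_le_exp.mpr ((le_abs_self _).trans hy2)
  have h2δ : infDist Φy (epiE h) < 2*δ :=
    (hgap _ ⟨hΦ, hΦball⟩).trans_lt (by linarith)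
  obtain ⟨z, hzh, hΦz⟩ := (infDist_lt_iff hhne).mp h2δ
  have hzh' : h z.1 ≤ ((z.2 : ℝ) : EReal) := hzh
  have hz2pos : 0 < z.2 := by
    have h1 : (0 : EReal) < ((z.2 : ℝ) : EReal) := (hhpos z.1).trans_le hzh'
    exact EReal.coe_pos.mp h1
  set m := Real.exp (-(2*r+1)) with hmdef
  have hm : 0 < m := Real.exp_pos _
  have hsnd : |Real.exp y.2 - z.2| < 2*δ := by
    have h1 : dist Φy.2 z.2 ≤ dist Φy z := by rw [Prod.dist_eq]; exact le_sup_right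
    rw [Real.dist_eq] at h1
    exact lt_of_le_of_lt h1 hΦz
  have hfst : |y.1 - z.1| < 2*δ := by
    have h1 : dist Φy.1 z.1 ≤ dist Φy z := by rw [Prod.dist_eq]; exact le_sup_left
    rw [Real.dist_eq] at h1
    exact lt_of_le_of_lt h1 hΦz
  have hey : m ≤ Real.exp y.2 := Real.exp_le_exp.mpr (neg_le_of_abs_le hy2)
  have habs1 : Real.exp y.2 - z.2 ≤ |Real.exp y.2 - z.2| := le_abs_self _
  have hz2m : m/2 ≤ z.2 := by linarith
  have heym : m/2 ≤ Real.exp y.2 := by linarith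
  set w : ℝ × ℝ := (z.1, Real.log z.2) with hwdef
  have hw : w ∈ B := by
    rw [hB, mem_epiE_log hhpos]
    show h z.1 ≤ ((Real.exp (Real.log z.2) : ℝ) : EReal)
    rwa [Real.exp_log hz2pos]
  have hinvm : 1/m = Real.exp (2*r+1) := by
    rw [hmdef, Real.exp_neg]
    field_simp
  have hlogbound : |y.2 - Real.log z.2| ≤ 4 * Real.exp (2*r+1) * δ := by
    have h1 : |Real.log (Real.exp y.2) - Real.log z.2| ≤ |Real.exp y.2 - z.2| / (m/2) :=
      abs_log_sub_log_le (by linarith) heym hz2m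
    rw [Real.log_exp] at h1
    have h2 : |Real.exp y.2 - z.2| / (m/2) ≤ (2*δ) / (m/2) := by
      have hm2 : (0:ℝ) < m/2 := by linarith
      exact (div_le_div_iff_of_pos_right hm2).mpr hsnd.le
    have h3 : (2*δ) / (m/2) = 4 * (1/m) * δ := by field_simp; ring
    rw [h3, hinvm] at h2
    linarith
  have hdistyw : dist y w ≤ 4 * Real.exp (2*r+1) * δ := by
    rw [Prod.dist_eq]
    refine max_le ?_ ?_
    · rw [Real.dist_eq]
      have : 2*δ ≤ 4 * Real.exp (2*r+1) * δ := by nlinarith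
      linarith [le_of_lt hfst]
    · rw [Real.dist_eq]; exact hlogbound
  calc infDist x B ≤ dist x w := infDist_le_dist_of_mem hw
    _ ≤ dist x y + dist y w := dist_triangle _ _ _
    _ ≤ d + 4 * Real.exp (2*r+1) * δ + η := by linarith

/-- Continuity of the logarithmic operator with respect to Attouch–Wets
convergence. -/
theorem log_continuous
    (F : ℕ → ℝ → EReal) (f : ℝ → EReal)
    (hFlsc : ∀ n, LowerSemicontinuous (F n)) (hFconv : ∀ n, ERConvex (F n))
    (hFpos : ∀ n θ, 0 < F n θ) (hF0 : ∀ n, F n 0 = 1)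
    (hlsc : LowerSemicontinuous f) (hconv : ERConvex f)
    (hpos : ∀ θ, 0 < f θ) (h0 : f 0 = 1)
    (haw : AWTendsto F f) :
    AWTendsto (fun n θ => logE (F n θ)) (fun θ => logE (f θ)) := by
  intro r hr
  rw [Metric.tendsto_atTop]
  intro ε hε
  set R := Real.exp (2*r+1) with hRdef
  set C := 4 * Real.exp (2*r+1) with hCdef
  have hC : 0 < C := by positivity
  set δ := min (Real.exp (-(2*r+1)) / 4) (ε / (2*C)) with hδdef
  have hδpos : 0 < δ := lt_min (by positivity) (by positivity)
  have hδ4 : 4 * δ ≤ Real.exp (-(2*r+1)) := by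
    have := min_le_left (Real.exp (-(2*r+1)) / 4) (ε / (2*C))
    rw [← hδdef] at this
    linarith
  have hδε : C * δ ≤ ε / 2 := by
    have h1 : δ ≤ ε / (2*C) := min_le_right _ _
    calc C * δ ≤ C * (ε / (2*C)) := by gcongr
      _ = ε / 2 := by field_simp
  have hR : 0 < R := Real.exp_pos _
  have htd := haw R hR
  rw [Metric.tendsto_atTop] at htd
  obtain ⟨N, hN⟩ := htd δ hδpos
  refine ⟨N, fun n hn => ?_⟩
  have hgapn : awGap (epiE (F n)) (epiE f) R ≤ δ := by
    have h1 := hN n hn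
    rw [Real.dist_eq, sub_zero] at h1
    exact (le_abs_self _).trans h1.le
  -- pointwise bounds
  have hbound : ∀ x ∈ closedBall (0 : ℝ × ℝ) r,
      |infDist x (epiE (fun t => logE (F n t))) -
        infDist x (epiE (fun t => logE (f t)))| ≤ C * δ := by
    intro x hx
    have hgap1 : ∀ y ∈ epiE (F n) ∩ closedBall (0 : ℝ × ℝ) R,
        infDist y (epiE f) ≤ δ := fun y hy => gap_bound_left hgapn hy.1 hy.2
    have hgap2 : ∀ y ∈ epiE f ∩ closedBall (0 : ℝ × ℝ) R,
        infDist y (epiE (F n)) ≤ δ := fun y hy => gap_bound_right hgapn hy.1 hy.2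
    have h1 := oneSide (F n) f (hFpos n) hpos (hF0 n) h0 r δ hr hδpos hδ4 hgap1 x hx
    have h2 := oneSide f (F n) hpos (hFpos n) h0 (hF0 n) r δ hr hδpos hδ4 hgap2 x hx
    rw [abs_sub_le_iff]
    constructor
    · rw [hCdef]; linarith
    · rw [hCdef]; linarith
  have hgaple : awGap (epiE (fun t => logE (F n t))) (epiE (fun t => logE (f t))) r
      ≤ C * δ := by
    apply Real.sSup_le
    · rintro v ⟨x, hx, rfl⟩
      exact hbound x hx
    · positivity
  have hgapnn : 0 ≤ awGap (epiE (fun t => logE (F n t)))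
      (epiE (fun t => logE (f t))) r :=
    Real.sSup_nonneg (by rintro v ⟨x, hx, rfl⟩; exact abs_nonneg _)
  rw [Real.dist_eq, sub_zero, abs_of_nonneg hgapnn]
  calc awGap _ _ r ≤ C * δ := hgaple
    _ ≤ ε / 2 := hδε
    _ < ε := by linarith

end
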